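/- If x → x' is the M-move from a non-exceptional position x with B(x) odd, then B(x') = B(x) − 1. -/

import Mathlib

/-- `z` is a basic position with parameter `b`: coordinate sum `k*b`, all coordinates
at most `b`, all coordinates even if `b` is even, exactly one even if `b` is odd. -/
def IsBasic (k : ℕ) (z : Fin (k+1) → ℕ) (b : ℕ) : Prop :=
  (∑ i, z i) = k * b ∧ (∀ i, z i ≤ b) ∧
    (Even b → ∀ i, Even (z i)) ∧ (Odd b → ∃! i, Even (z i))

/-- `Pre k y x` means `y ⪯ x`: the sorted vector of `y` is componentwise ≤ that of `x`. -/
def Pre (k : ℕ) (y x : Fin (k+1) → ℕ) : Prop :=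
  ∀ i, (y ∘ Tuple.sort y) i ≤ (x ∘ Tuple.sort x) i

/-- `BVal k x = max { b : some basic z with parameter b satisfies z ⪯ x }`. -/
noncomputable def BVal (k : ℕ) (x : Fin (k+1) → ℕ) : ℕ :=
  sSup {b | ∃ z, IsBasic k z b ∧ Pre k z x}

/-- A move in NIM(k+1,k): keep coordinate `i`, decrease every other (positive) coordinate by 1. -/
def MoveK (k : ℕ) (x y : Fin (k+1) → ℕ) : Prop :=
  ∃ i, (∀ j, j ≠ i → 0 < x j) ∧ ∀ j, y j = if j = i then x j else x j - 1

/-- The M-move: keep a smallest even coordinate if one exists, otherwise keep a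
largest coordinate; decrease the other k (positive) coordinates by 1. -/
def MMove (k : ℕ) (x y : Fin (k+1) → ℕ) : Prop :=
  ∃ i, (∀ j, j ≠ i → 0 < x j) ∧
    ((∃ j, Even (x j)) → Even (x i) ∧ ∀ j, Even (x j) → x i ≤ x j) ∧
    ((∀ j, Odd (x j)) → ∀ j, x j ≤ x i) ∧
    (∀ j, y j = if j = i then x j else x j - 1)

/-- Exceptional position: all coordinates odd, all `< m`, and `|x| = k*m + k - 1`
for some even `m`. -/
def Exceptional (k : ℕ) (x : Fin (k+1) → ℕ) : Prop :=
  ∃ m, Even m ∧ (∀ i, Odd (x i)) ∧ (∀ i, x i < m) ∧ (∑ i, x i) = k * m + k - 1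

/-- `MVal k x m`: playing the M-rule from `x`, the game ends after exactly `m` moves. -/
inductive MVal (k : ℕ) : (Fin (k+1) → ℕ) → ℕ → Prop
  | zero (x) : (¬ ∃ y, MoveK k x y) → MVal k x 0
  | succ (x y m) : MMove k x y → MVal k y m → MVal k x (m + 1)

section AuxSection
namespace Aux

noncomputable def cnt {n : ℕ} (x : Fin n → ℕ) (t : ℕ) : ℕ := Fintype.card {i // x i ≤ t}

lemma cnt_comp_perm {n : ℕ} (x : Fin n → ℕ) (σ : Equiv.Perm (Fin n)) (t : ℕ) :
    cnt (x ∘ σ) t = cnt x t :=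
  Fintype.card_congr (Equiv.subtypeEquiv σ (fun _ => Iff.rfl))

lemma pre_iff_cnt {k : ℕ} (z x : Fin (k+1) → ℕ) :
    Pre k z x ↔ ∀ t, cnt x t ≤ cnt z t := by
  have hmz := Tuple.monotone_sort z
  have hmx := Tuple.monotone_sort x
  constructor
  · intro h t
    rw [← cnt_comp_perm x (Tuple.sort x) t, ← cnt_comp_perm z (Tuple.sort z) t]
    exact Fintype.card_subtype_mono _ _ (fun j hj => le_trans (h j) hj)
  · intro h i
    have h2 : (i : ℕ) < cnt (z ∘ Tuple.sort z) ((x ∘ Tuple.sort x) i) := by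
      have h1 : (i : ℕ) < cnt (x ∘ Tuple.sort x) ((x ∘ Tuple.sort x) i) :=
        by rw [cnt, Fintype.card_subtype]; exact (Tuple.lt_card_le_iff_apply_le_of_monotone (j := i) hmx).mpr le_rfl
      have h3 := h ((x ∘ Tuple.sort x) i)
      rw [← cnt_comp_perm x (Tuple.sort x) ((x ∘ Tuple.sort x) i),
        ← cnt_comp_perm z (Tuple.sort z) ((x ∘ Tuple.sort x) i)] at h3
      omega
    rw [cnt, Fintype.card_subtype] at h2
    exact (Tuple.lt_card_le_iff_apply_le_of_monotone (j := i) hmz).mp h2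

lemma pre_of_le {k : ℕ} {z x : Fin (k+1) → ℕ} (h : ∀ i, z i ≤ x i) : Pre k z x := by
  rw [pre_iff_cnt]
  intro t
  exact Fintype.card_subtype_mono _ _ (fun j hj => le_trans (h j) hj)

lemma pre_trans_le {k : ℕ} {z x x' : Fin (k+1) → ℕ} (hxx : ∀ i, x' i ≤ x i)
    (h : Pre k z x') : Pre k z x := by
  rw [pre_iff_cnt] at h ⊢
  intro t
  refine le_trans ?_ (h t)
  exact Fintype.card_subtype_mono _ _ (fun j hj => le_trans (hxx j) hj)

lemma exists_perm_of_pre {k : ℕ} {z x : Fin (k+1) → ℕ} (h : Pre k z x) :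
    ∃ σ : Equiv.Perm (Fin (k+1)), ∀ i, z i ≤ x (σ i) := by
  refine ⟨(Tuple.sort z).symm.trans (Tuple.sort x), fun i => ?_⟩
  have := h ((Tuple.sort z).symm i)
  simpa using this

lemma sum_le_of_pre {k : ℕ} {z x : Fin (k+1) → ℕ} (h : Pre k z x) :
    ∑ i, z i ≤ ∑ i, x i := by
  obtain ⟨σ, hσ⟩ := exists_perm_of_pre h
  calc ∑ i, z i ≤ ∑ i, x (σ i) := Finset.sum_le_sum (fun i _ => hσ i)
  _ = ∑ i, x i := Equiv.sum_comp σ x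

lemma exists_even_sum_eq {n : ℕ} :
    ∀ (N : ℕ) (c : Fin n → ℕ), (∑ i, c i = N) → (∀ i, c i % 2 = 0) →
    ∀ s, s % 2 = 0 → s ≤ N →
    ∃ w : Fin n → ℕ, (∀ i, w i ≤ c i) ∧ (∀ i, w i % 2 = 0) ∧ ∑ i, w i = s := by
  intro N
  induction N using Nat.strong_induction_on with
  | _ N ih =>
    intro c hc hev s hs hsle
    rcases eq_or_lt_of_le hsle with heq | hlt
    · exact ⟨c, fun i => le_rfl, hev, by omega⟩
    · have hex : ∃ i, 0 < c i := by
        by_contra hno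
        push_neg at hno
        have : ∑ i, c i = 0 := Finset.sum_eq_zero (fun i _ => Nat.le_zero.mp (hno i))
        omega
      obtain ⟨i0, hi0⟩ := hex
      have h2 : 2 ≤ c i0 := by have := hev i0; omega
      set c' : Fin n → ℕ := Function.update c i0 (c i0 - 2) with hc'
      have hsplit : c i0 + ∑ x ∈ Finset.univ \ {i0}, c x = N := by
        rw [← Finset.erase_eq, Finset.add_sum_erase _ c (Finset.mem_univ i0)]; exact hc
      have hsum' : ∑ i, c' i = N - 2 := by
        rw [hc', Finset.sum_update_of_mem (Finset.mem_univ i0)]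
        omega
      have hev' : ∀ i, c' i % 2 = 0 := by
        intro i
        rcases eq_or_ne i i0 with rfl | hne
        · rw [hc', Function.update_self]; have := hev i; omega
        · rw [hc', Function.update_of_ne hne]; exact hev i
      have hN2 : N - 2 < N := by omega
      have hsle' : s ≤ N - 2 := by
        have hNev : N % 2 = 0 := by
          rw [← hc, Finset.sum_nat_mod]
          rw [Finset.sum_congr rfl (fun i (_ : i ∈ Finset.univ) => hev i)]
          simp
        omega
      obtain ⟨w, hw1, hw2, hw3⟩ := ih (N - 2) hN2 c' hsum' hev' s hs hsle'
      refine ⟨w, fun i => ?_, hw2, hw3⟩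
      refine le_trans (hw1 i) ?_
      rcases eq_or_ne i i0 with rfl | hne
      · rw [hc', Function.update_self]; omega
      · rw [hc', Function.update_of_ne hne]

def evcap (m t : ℕ) : ℕ := min (2 * (t / 2)) m
def og (t : ℕ) : ℕ := t - (1 - t % 2)
def odcap (b t : ℕ) : ℕ := min (og t) b

lemma even_feas_of_sum {k : ℕ} (x : Fin (k+1) → ℕ) (m : ℕ) (hm : m % 2 = 0)
    (hsum : k * m ≤ ∑ i, evcap m (x i)) :
    ∃ z, IsBasic k z m ∧ Pre k z x := by
  have hkm : (k * m) % 2 = 0 := Nat.even_iff.mp (Even.mul_left (Nat.even_iff.mpr hm) k)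
  obtain ⟨w, hw1, hw2, hw3⟩ := exists_even_sum_eq (∑ i, evcap m (x i))
    (fun i => evcap m (x i)) rfl (fun i => by show evcap m (x i) % 2 = 0; unfold evcap; omega)
    (k * m) hkm hsum
  refine ⟨w, ⟨hw3, fun i => le_trans (hw1 i) (min_le_right _ _),
    fun _ i => Nat.even_iff.mpr (hw2 i),
    fun hodd => absurd (Nat.odd_iff.mp hodd) (by omega)⟩, pre_of_le (fun i => ?_)⟩
  have := hw1 i
  unfold evcap at this
  omega

lemma odd_feas_spec {k : ℕ} {x z : Fin (k+1) → ℕ} {b : ℕ} (hb : b % 2 = 1)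
    (hz : IsBasic k z b) (hp : Pre k z x) :
    ∃ e, (∀ j, j ≠ e → 1 ≤ x j) ∧
      k * b ≤ evcap (b-1) (x e) + ∑ j ∈ Finset.univ.erase e, odcap b (x j) := by
  obtain ⟨σ, hσ⟩ := exists_perm_of_pre hp
  obtain ⟨e', he'ev, he'uniq⟩ := hz.2.2.2 (Nat.odd_iff.mpr hb)
  have hodd : ∀ i, i ≠ e' → z i % 2 = 1 := by
    intro i hi
    rcases Nat.even_or_odd (z i) with hev | hod
    · exact absurd (he'uniq i hev) hi
    · exact Nat.odd_iff.mp hod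
  refine ⟨σ e', ?_, ?_⟩
  · intro j hj
    have h1 := hσ (σ.symm j)
    have h2 : σ.symm j ≠ e' := by
      intro hc; apply hj; rw [← hc]; simp
    have h3 := hodd _ h2
    simp only [Equiv.apply_symm_apply] at h1
    omega
  · have he'cap : z e' ≤ evcap (b-1) (x (σ e')) := by
      have h1 := hσ e'
      have h2 := hz.2.1 e'
      have h3 : z e' % 2 = 0 := Nat.even_iff.mp he'ev
      unfold evcap
      omega
    have hrest : ∀ i ∈ Finset.univ.erase e', z i ≤ odcap b (x (σ i)) := by
      intro i hi
      have hi' : i ≠ e' := Finset.ne_of_mem_erase hi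
      have h1 := hσ i
      have h2 := hz.2.1 i
      have h3 := hodd i hi'
      unfold odcap og
      omega
    have hre : ∑ i ∈ Finset.univ.erase e', odcap b (x (σ i))
        = ∑ j ∈ Finset.univ.erase (σ e'), odcap b (x j) := by
      rw [show (Finset.univ.erase (σ e')) = (Finset.univ.erase e').map σ.toEmbedding by
        rw [Finset.map_erase]
        congr 1
        · simp
        ]
      rw [Finset.sum_map]
      rfl
    calc k * b = ∑ i, z i := hz.1.symm
    _ = z e' + ∑ i ∈ Finset.univ.erase e', z i :=
        (Finset.add_sum_erase _ z (Finset.mem_univ e')).symm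
    _ ≤ evcap (b-1) (x (σ e')) + ∑ i ∈ Finset.univ.erase e', odcap b (x (σ i)) :=
        Nat.add_le_add he'cap (Finset.sum_le_sum hrest)
    _ = evcap (b-1) (x (σ e')) + ∑ j ∈ Finset.univ.erase (σ e'), odcap b (x j) := by rw [hre]

lemma arith1 (b t : ℕ) (hb : b % 2 = 1) (ht : 1 ≤ t) :
    odcap b t ≤ evcap (b-1) (t-1) + 1 := by unfold odcap og evcap; omega
lemma arith3 (b xe xi : ℕ) (hb : b % 2 = 1) (hxi : 1 ≤ xi)
    (hrule : xe % 2 = 0 → xi % 2 = 0 ∧ xi ≤ xe) :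
    evcap (b-1) xe + odcap b xi ≤ evcap (b-1) (xe-1) + evcap (b-1) xi + 1 := by
  unfold odcap og evcap; omega
lemma arith4 (b t : ℕ) (hb : b % 2 = 1) (ht : 2 ≤ t) :
    odcap b (t-1) + 1 ≤ evcap (b+1) t := by unfold odcap og evcap; omega
lemma arith5 (b xe : ℕ) : evcap (b-1) (xe-1) ≤ evcap (b+1) xe := by unfold evcap; omega
lemma arith5i (b xe : ℕ) : evcap (b-1) xe ≤ evcap (b+1) xe := by unfold evcap; omega
lemma arith6a (b t : ℕ) (hb : b % 2 = 1) (ht : 1 ≤ t) :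
    odcap b t ≤ evcap (b+1) t + 1 := by unfold odcap og evcap; omega
lemma arith6b (b t : ℕ) (hb : b % 2 = 1) (h : t % 2 = 0 ∨ b < t) :
    odcap b t ≤ evcap (b+1) t := by unfold odcap og evcap; omega

end Aux
end AuxSection

theorem stmt16 (k : ℕ) (hk : 2 ≤ k) (x x' : Fin (k+1) → ℕ)
    (hodd : Odd (BVal k x)) (hexc : ¬ Exceptional k x) (h : MMove k x x') :
    BVal k x' = BVal k x - 1 := by
  classical
  obtain ⟨i, hpos, hEvRule, hOddRule, hx'def⟩ := h
  set b := BVal k x with hbdef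
  have hb1 : b % 2 = 1 := Nat.odd_iff.mp hodd
  -- set facts
  have hzero : ∀ y : Fin (k+1) → ℕ, 0 ∈ {c | ∃ z, IsBasic k z c ∧ Pre k z y} := by
    intro y
    refine ⟨fun _ => 0, ⟨by simp, fun i => le_rfl, fun _ _ => Even.zero,
      fun hoddc => absurd hoddc (by simp [Nat.odd_iff])⟩,
      Aux.pre_of_le (fun i => Nat.zero_le _)⟩
  have hbdd : ∀ y : Fin (k+1) → ℕ, BddAbove {c | ∃ z, IsBasic k z c ∧ Pre k z y} := by
    intro y
    refine ⟨∑ i, y i, fun c hc => ?_⟩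
    obtain ⟨z, hz, hp⟩ := hc
    have h1 : ∑ i, z i ≤ ∑ i, y i := Aux.sum_le_of_pre hp
    have h2 := hz.1
    have h3 : c ≤ k * c := Nat.le_mul_of_pos_left c (by omega)
    omega
  have hmem : b ∈ {c | ∃ z, IsBasic k z c ∧ Pre k z x} :=
    Nat.sSup_mem ⟨0, hzero x⟩ (hbdd x)
  obtain ⟨zb, hzb, hzbp⟩ := hmem
  -- x' facts
  have hx'le : ∀ j, x' j ≤ x j := fun j => by rw [hx'def j]; split <;> omega
  have hx'i : x' i = x i := by rw [hx'def i]; simp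
  have hx'ne : ∀ j, j ≠ i → x' j = x j - 1 := fun j hj => by rw [hx'def j, if_neg hj]
  -- multiplicative identities
  have hmul1 : k * (b + 1) = k * b + k := by ring
  have hmul2 : k * (b - 1) + k = k * b := by
    have hbb : b - 1 + 1 = b := by omega
    calc k * (b-1) + k = k * ((b-1) + 1) := by ring
    _ = k * b := by rw [hbb]
  -- upper bound : BVal x' ≤ b
  have hub : BVal k x' ≤ b := by
    apply csSup_le ⟨0, hzero x'⟩
    intro c hc
    obtain ⟨z, hz1, hz2⟩ := hc
    exact le_csSup (hbdd x) ⟨z, hz1, Aux.pre_trans_le hx'le hz2⟩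
  -- b+1 not feasible for x
  have hnot : ¬ (k * (b+1) ≤ ∑ j, Aux.evcap (b+1) (x j)) := by
    intro hcon
    obtain ⟨z, hz1, hz2⟩ := Aux.even_feas_of_sum x (b+1) (by omega) hcon
    have : b + 1 ≤ b := le_csSup (hbdd x) ⟨z, hz1, hz2⟩
    omega
  have hEeven : (∑ j, Aux.evcap (b+1) (x j)) % 2 = 0 := by
    rw [Finset.sum_nat_mod]
    rw [Finset.sum_congr rfl (fun j (_ : j ∈ Finset.univ) =>
      (by unfold Aux.evcap; omega : Aux.evcap (b+1) (x j) % 2 = 0))]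
    simp
  have hkb1ev : (k * (b+1)) % 2 = 0 :=
    Nat.even_iff.mp (Even.mul_left (Nat.even_iff.mpr (by omega)) k)
  have hE : (∑ j, Aux.evcap (b+1) (x j)) + 2 ≤ k * (b + 1) := by omega
  -- Part (a) : k*(b-1) ≤ ∑ evcap (b-1) (x' j)
  obtain ⟨e, hpose, hsume⟩ := Aux.odd_feas_spec hb1 hzb hzbp
  have suma : k * (b-1) ≤ ∑ j, Aux.evcap (b-1) (x' j) := by
    by_cases he : e = i
    · subst he
      have hsplit : ∑ j, Aux.evcap (b-1) (x' j)
          = Aux.evcap (b-1) (x' e) + ∑ j ∈ Finset.univ.erase e, Aux.evcap (b-1) (x' j) :=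
        (Finset.add_sum_erase _ _ (Finset.mem_univ e)).symm
      have hterm : ∀ j ∈ Finset.univ.erase e,
          Aux.odcap b (x j) ≤ Aux.evcap (b-1) (x' j) + 1 := by
        intro j hj
        have hj' := Finset.ne_of_mem_erase hj
        rw [hx'ne j hj']
        exact Aux.arith1 b (x j) hb1 (hpose j hj')
      have hs1 : ∑ j ∈ Finset.univ.erase e, Aux.odcap b (x j)
          ≤ ∑ j ∈ Finset.univ.erase e, Aux.evcap (b-1) (x' j) + (Finset.univ.erase e).card := by
        calc ∑ j ∈ Finset.univ.erase e, Aux.odcap b (x j)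
            ≤ ∑ j ∈ Finset.univ.erase e, (Aux.evcap (b-1) (x' j) + 1) :=
              Finset.sum_le_sum hterm
        _ = ∑ j ∈ Finset.univ.erase e, Aux.evcap (b-1) (x' j) + (Finset.univ.erase e).card := by
              rw [Finset.sum_add_distrib, Finset.sum_const, smul_eq_mul, mul_one]
      have hcard : (Finset.univ.erase e).card = k := by
        rw [Finset.card_erase_of_mem (Finset.mem_univ e), Finset.card_univ, Fintype.card_fin]
        omega
      have hcapeq : Aux.evcap (b-1) (x' e) = Aux.evcap (b-1) (x e) := by rw [hx'i]
      omega
    · have hie : i ∈ Finset.univ.erase e := Finset.mem_erase.mpr ⟨fun hc => he hc.symm, Finset.mem_univ i⟩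
      set T := (Finset.univ.erase e).erase i with hT
      have hsplit1 : ∑ j ∈ Finset.univ.erase e, Aux.odcap b (x j)
          = Aux.odcap b (x i) + ∑ j ∈ T, Aux.odcap b (x j) :=
        (Finset.add_sum_erase _ _ hie).symm
      have hsplit2 : ∑ j, Aux.evcap (b-1) (x' j)
          = Aux.evcap (b-1) (x' e) + (Aux.evcap (b-1) (x' i) + ∑ j ∈ T, Aux.evcap (b-1) (x' j)) := by
        rw [hT, ← Finset.add_sum_erase _ (fun j => Aux.evcap (b-1) (x' j)) (Finset.mem_univ e)]
        congr 1
        exact (Finset.add_sum_erase _ (fun j => Aux.evcap (b-1) (x' j)) hie).symm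
      have hterm : ∀ j ∈ T, Aux.odcap b (x j) ≤ Aux.evcap (b-1) (x' j) + 1 := by
        intro j hj
        have hj1 : j ≠ i := Finset.ne_of_mem_erase hj
        have hj2 : j ≠ e := Finset.ne_of_mem_erase (Finset.mem_of_mem_erase hj)
        rw [hx'ne j hj1]
        exact Aux.arith1 b (x j) hb1 (hpose j hj2)
      have hs1 : ∑ j ∈ T, Aux.odcap b (x j) ≤ ∑ j ∈ T, Aux.evcap (b-1) (x' j) + T.card := by
        calc ∑ j ∈ T, Aux.odcap b (x j) ≤ ∑ j ∈ T, (Aux.evcap (b-1) (x' j) + 1) :=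
              Finset.sum_le_sum hterm
        _ = _ := by rw [Finset.sum_add_distrib, Finset.sum_const, smul_eq_mul, mul_one]
      have hcardT : T.card = k - 1 := by
        rw [hT, Finset.card_erase_of_mem hie,
          Finset.card_erase_of_mem (Finset.mem_univ e), Finset.card_univ, Fintype.card_fin]
        omega
      have hkey : Aux.evcap (b-1) (x e) + Aux.odcap b (x i)
          ≤ Aux.evcap (b-1) (x' e) + Aux.evcap (b-1) (x' i) + 1 := by
        rw [hx'ne e he, hx'i]
        refine Aux.arith3 b (x e) (x i) hb1 (hpose i (fun hc => he hc.symm)) ?_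
        intro hxe2
        have hev : Even (x e) := Nat.even_iff.mpr hxe2
        obtain ⟨hi1, hi2⟩ := hEvRule ⟨e, hev⟩
        exact ⟨Nat.even_iff.mp hi1, hi2 e hev⟩
      omega
  -- construct witness for b-1 ∈ S x'
  have hlb : b - 1 ≤ BVal k x' := by
    obtain ⟨z', hz'1, hz'2⟩ := Aux.even_feas_of_sum x' (b-1) (by omega) suma
    exact le_csSup (hbdd x') ⟨z', hz'1, hz'2⟩
  -- Part (b) : b ∉ S x'
  have hbnot : b ∉ {c | ∃ z, IsBasic k z c ∧ Pre k z x'} := by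
    rintro ⟨z2, hz2, hz2p⟩
    obtain ⟨e, hpose', hsume'⟩ := Aux.odd_feas_spec hb1 hz2 hz2p
    by_cases he : e = i
    · subst he
      have hterm : ∀ j ∈ Finset.univ.erase e,
          Aux.odcap b (x' j) + 1 ≤ Aux.evcap (b+1) (x j) := by
        intro j hj
        have hj' := Finset.ne_of_mem_erase hj
        have hxj : 2 ≤ x j := by
          have := hpose' j hj'
          have := hx'ne j hj'
          omega
        rw [hx'ne j hj']
        exact Aux.arith4 b (x j) hb1 hxj
      have hs1 : ∑ j ∈ Finset.univ.erase e, Aux.odcap b (x' j) + (Finset.univ.erase e).card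
          ≤ ∑ j ∈ Finset.univ.erase e, Aux.evcap (b+1) (x j) := by
        calc ∑ j ∈ Finset.univ.erase e, Aux.odcap b (x' j) + (Finset.univ.erase e).card
            = ∑ j ∈ Finset.univ.erase e, (Aux.odcap b (x' j) + 1) := by
              rw [Finset.sum_add_distrib, Finset.sum_const, smul_eq_mul, mul_one]
        _ ≤ _ := Finset.sum_le_sum hterm
      have hcard : (Finset.univ.erase e).card = k := by
        rw [Finset.card_erase_of_mem (Finset.mem_univ e), Finset.card_univ, Fintype.card_fin]
        omega
      have hsplitE : ∑ j, Aux.evcap (b+1) (x j)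
          = Aux.evcap (b+1) (x e) + ∑ j ∈ Finset.univ.erase e, Aux.evcap (b+1) (x j) :=
        (Finset.add_sum_erase _ _ (Finset.mem_univ e)).symm
      have hcap : Aux.evcap (b-1) (x' e) ≤ Aux.evcap (b+1) (x e) := by
        rw [hx'i]; exact Aux.arith5i b (x e)
      omega
    · have hie : i ∈ Finset.univ.erase e := Finset.mem_erase.mpr ⟨fun hc => he hc.symm, Finset.mem_univ i⟩
      set T := (Finset.univ.erase e).erase i with hT
      have hsplit1 : ∑ j ∈ Finset.univ.erase e, Aux.odcap b (x' j)
          = Aux.odcap b (x' i) + ∑ j ∈ T, Aux.odcap b (x' j) :=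
        (Finset.add_sum_erase _ _ hie).symm
      have hsplitE : ∑ j, Aux.evcap (b+1) (x j)
          = Aux.evcap (b+1) (x e) + (Aux.evcap (b+1) (x i) + ∑ j ∈ T, Aux.evcap (b+1) (x j)) := by
        rw [hT, ← Finset.add_sum_erase _ (fun j => Aux.evcap (b+1) (x j)) (Finset.mem_univ e)]
        congr 1
        exact (Finset.add_sum_erase _ (fun j => Aux.evcap (b+1) (x j)) hie).symm
      have hterm : ∀ j ∈ T, Aux.odcap b (x' j) + 1 ≤ Aux.evcap (b+1) (x j) := by
        intro j hj
        have hj1 : j ≠ i := Finset.ne_of_mem_erase hj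
        have hj2 : j ≠ e := Finset.ne_of_mem_erase (Finset.mem_of_mem_erase hj)
        have hxj : 2 ≤ x j := by
          have := hpose' j hj2
          have := hx'ne j hj1
          omega
        rw [hx'ne j hj1]
        exact Aux.arith4 b (x j) hb1 hxj
      have hs1 : ∑ j ∈ T, Aux.odcap b (x' j) + T.card ≤ ∑ j ∈ T, Aux.evcap (b+1) (x j) := by
        calc ∑ j ∈ T, Aux.odcap b (x' j) + T.card = ∑ j ∈ T, (Aux.odcap b (x' j) + 1) := by
              rw [Finset.sum_add_distrib, Finset.sum_const, smul_eq_mul, mul_one]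
        _ ≤ _ := Finset.sum_le_sum hterm
      have hcardT : T.card = k - 1 := by
        rw [hT, Finset.card_erase_of_mem hie,
          Finset.card_erase_of_mem (Finset.mem_univ e), Finset.card_univ, Fintype.card_fin]
        omega
      have hcap : Aux.evcap (b-1) (x' e) ≤ Aux.evcap (b+1) (x e) := by
        rw [hx'ne e he]; exact Aux.arith5 b (x e)
      have hxi1 : 1 ≤ x i := by
        have := hpose' i (fun hc => he hc.symm)
        rw [hx'i] at this; exact this
      by_cases hcase : x i % 2 = 1 ∧ x i ≤ b
      · -- exceptional case
        have hallodd : ∀ j, Odd (x j) := by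
          intro j
          by_contra hj
          have hev : Even (x j) := Nat.not_odd_iff_even.mp hj
          have := Nat.even_iff.mp (hEvRule ⟨j, hev⟩).1
          omega
        have hmax := hOddRule hallodd
        have hEeq : ∑ j, Aux.evcap (b+1) (x j) + (k+1) = ∑ j, x j := by
          have : ∀ j ∈ Finset.univ, Aux.evcap (b+1) (x j) + 1 = x j := by
            intro j _
            have h1 : x j % 2 = 1 := Nat.odd_iff.mp (hallodd j)
            have h2 : x j ≤ b := le_trans (hmax j) hcase.2
            unfold Aux.evcap
            omega
          calc ∑ j, Aux.evcap (b+1) (x j) + (k+1)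
              = ∑ j, (Aux.evcap (b+1) (x j) + 1) := by
                rw [Finset.sum_add_distrib, Finset.sum_const, smul_eq_mul, mul_one,
                  Finset.card_univ, Fintype.card_fin]
          _ = ∑ j, x j := Finset.sum_congr rfl this
        have hcapi : Aux.odcap b (x' i) ≤ Aux.evcap (b+1) (x i) + 1 := by
          rw [hx'i]; exact Aux.arith6a b (x i) hb1 hxi1
        -- pin down the total sum and contradict non-exceptionality
        apply hexc
        refine ⟨b+1, Nat.even_iff.mpr (by omega), hallodd, fun j => by
          have := le_trans (hmax j) hcase.2; omega, ?_⟩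
        omega
      · have hcase' : x i % 2 = 0 ∨ b < x i := by
          rcases Nat.even_or_odd (x i) with hev | hod
          · exact Or.inl (Nat.even_iff.mp hev)
          · have := Nat.odd_iff.mp hod
            right
            by_contra hle
            exact hcase ⟨this, by omega⟩
        have hcapi : Aux.odcap b (x' i) ≤ Aux.evcap (b+1) (x i) := by
          rw [hx'i]; exact Aux.arith6b b (x i) hb1 hcase'
        omega
  -- conclude
  have hmem' : BVal k x' ∈ {c | ∃ z, IsBasic k z c ∧ Pre k z x'} :=
    Nat.sSup_mem ⟨0, hzero x'⟩ (hbdd x')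
  have hne : BVal k x' ≠ b := fun hEq => hbnot (hEq ▸ hmem')
  omega
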